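/- Fix d ∈ ℕ, c ∈ ℝ, r > 0, ε > 0. Let (Q*1, Q*2) be any pair of binary-output quantizers on [c−r, c+r] with output levels γ1 < γ2 symmetric about c (i.e. γ1 = 2c − γ2) that satisfies conditions C4 (unbiasedness) and C5 (ε-PLDP), and set m*(w, w′) = E[(Q*1(w) + Q*2(w′) − w − w′)²]. Let m(w, w′) = E[(Q1 + Q2 − w − w′)²] for the correlated stochastic quantizers with parameters c, r, ε, d at inputs w, w′. Then for all w, w′ ∈ [c−r, c+r]: m(w, w′) − m*(w, w′) ≤ 3r²·α(ε)²/2^{d−5}. In particular, m(w, w′) converges uniformly on [c−r, c+r]² to the minimum achievable mean squared error as d → ∞. -/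
import Mathlib


open Real Set Finset

/-- `α(ε) = (e^ε + 1)/(e^ε − 1)`. -/
noncomputable def alphaFn (ε : ℝ) : ℝ := (Real.exp ε + 1) / (Real.exp ε - 1)

/-- `q(u) = 1/2 + (u − c)/(2rα(ε))`, the probability of the `+` level for input `u`. -/
noncomputable def qOf (c r ε u : ℝ) : ℝ := 1 / 2 + (u - c) / (2 * r * alphaFn ε)

/-- `T1 = ⌊2^d · q1⌋`. -/
noncomputable def T1 (c r ε : ℝ) (d : ℕ) (w : ℝ) : ℤ := ⌊(2 : ℝ) ^ d * qOf c r ε w⌋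

/-- `P(U = +1) = 2^d·q1 − ⌊2^d·q1⌋`. -/
noncomputable def pU1 (c r ε : ℝ) (d : ℕ) (w : ℝ) : ℝ :=
  (2 : ℝ) ^ d * qOf c r ε w - ⌊(2 : ℝ) ^ d * qOf c r ε w⌋

/-- `T2 = ⌊2^d · (1 − q2)⌋`. -/
noncomputable def T2 (c r ε : ℝ) (d : ℕ) (w' : ℝ) : ℤ := ⌊(2 : ℝ) ^ d * (1 - qOf c r ε w')⌋

/-- `P(U' = +1) = 2^d·(1 − q2) − ⌊2^d·(1 − q2)⌋`. -/
noncomputable def pU2 (c r ε : ℝ) (d : ℕ) (w' : ℝ) : ℝ :=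
  (2 : ℝ) ^ d * (1 - qOf c r ε w') - ⌊(2 : ℝ) ^ d * (1 - qOf c r ε w')⌋

/-- Value of the first correlated quantizer `Q1` on outcome `(z, u)`:
`c + rα` if `z < T1`, `c − rα` if `z > T1`, and `c + U·rα` if `z = T1`. -/
noncomputable def Q1val (c r ε : ℝ) (d : ℕ) (w : ℝ) (z : ℕ) (u : Bool) : ℝ :=
  if (z : ℤ) < T1 c r ε d w then c + r * alphaFn ε
  else if T1 c r ε d w < (z : ℤ) then c - r * alphaFn ε
  else c + (if u then 1 else -1) * r * alphaFn ε

/-- Value of the second correlated quantizer `Q2` on outcome `(z, u')`: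
`c − rα` if `z < T2`, `c + rα` if `z > T2`, and `c − U'·rα` if `z = T2`. -/
noncomputable def Q2val (c r ε : ℝ) (d : ℕ) (w' : ℝ) (z : ℕ) (u' : Bool) : ℝ :=
  if (z : ℤ) < T2 c r ε d w' then c - r * alphaFn ε
  else if T2 c r ε d w' < (z : ℤ) then c + r * alphaFn ε
  else c - (if u' then 1 else -1) * r * alphaFn ε

/-- Joint pmf of the outcome `(Z, U, U')`: `Z` uniform on `{0, …, 2^d − 1}` and `Z, U, U'`
mutually independent (`u = true` encodes `U = +1`, `u' = true` encodes `U' = +1`). -/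
noncomputable def μjoint (c r ε : ℝ) (d : ℕ) (w w' : ℝ) (z : ℕ) (u u' : Bool) : ℝ :=
  ((2 : ℝ) ^ d)⁻¹ * (if u then pU1 c r ε d w else 1 - pU1 c r ε d w) *
    (if u' then pU2 c r ε d w' else 1 - pU2 c r ε d w')

/-- `m(w, w') = E[(Q1 + Q2 − w − w')²]` for the correlated stochastic quantizers. -/
noncomputable def mCor (c r ε : ℝ) (d : ℕ) (w w' : ℝ) : ℝ :=
  ∑ z ∈ Finset.range (2 ^ d), ∑ u : Bool, ∑ u' : Bool,
    μjoint c r ε d w w' z u u' *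
      (Q1val c r ε d w z u + Q2val c r ε d w' z u' - w - w') ^ 2

lemma sum_tri (N n : ℕ) (hn : n < N) (A B C : ℝ) :
    ∑ z ∈ Finset.range N, (if z < n then A else if n < z then B else C)
      = n * A + ((N - 1 - n : ℕ) : ℝ) * B + C := by
  have h1 : ∑ z ∈ Finset.Ico 0 n, (if z < n then A else if n < z then B else C) = n * A := by
    rw [Finset.sum_congr rfl (g := fun _ => A) (fun z hz => by
      simp only [Finset.mem_Ico] at hz; simp [hz.2])]
    simp [Finset.sum_const, Nat.card_Ico]
  have h2 : ∑ z ∈ Finset.Ico n (n+1), (if z < n then A else if n < z then B else C) = C := by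
    rw [Finset.sum_congr rfl (g := fun _ => C) (fun z hz => by
      simp only [Finset.mem_Ico] at hz
      rw [if_neg (by omega), if_neg (by omega)])]
    simp
  have h3 : ∑ z ∈ Finset.Ico (n+1) N, (if z < n then A else if n < z then B else C)
      = ((N - 1 - n : ℕ) : ℝ) * B := by
    rw [Finset.sum_congr rfl (g := fun _ => B) (fun z hz => by
      simp only [Finset.mem_Ico] at hz
      rw [if_neg (by omega), if_pos (by omega)])]
    have : N - (n+1) = N - 1 - n := by omega
    rw [Finset.sum_const, Nat.card_Ico, this, nsmul_eq_mul]
  rw [Finset.range_eq_Ico,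
    ← Finset.sum_Ico_consecutive _ (Nat.zero_le n) hn.le,
    ← Finset.sum_Ico_consecutive _ (Nat.le_succ n) hn, h1, h2, h3]
  ring

lemma sum_penta (N n m : ℕ) (hnm : n < m) (hm : m < N) (A B C D E : ℝ) :
    ∑ z ∈ Finset.range N,
        (if z < n then A else if z = n then B else if z < m then C
          else if z = m then D else E)
      = n * A + B + ((m - n - 1 : ℕ) : ℝ) * C + D + ((N - 1 - m : ℕ) : ℝ) * E := by
  set f : ℕ → ℝ := fun z =>
    if z < n then A else if z = n then B else if z < m then C else if z = m then D else E with hf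
  have h1 : ∑ z ∈ Finset.Ico 0 n, f z = n * A := by
    rw [Finset.sum_congr rfl (g := fun _ => A) (fun z hz => by
      simp only [Finset.mem_Ico] at hz; simp [hf, hz.2])]
    simp [Finset.sum_const, Nat.card_Ico]
  have h2 : ∑ z ∈ Finset.Ico n (n+1), f z = B := by
    rw [Finset.sum_congr rfl (g := fun _ => B) (fun z hz => by
      simp only [Finset.mem_Ico] at hz
      simp only [hf]
      rw [if_neg (by omega), if_pos (by omega)])]
    simp
  have h3 : ∑ z ∈ Finset.Ico (n+1) m, f z = ((m - n - 1 : ℕ) : ℝ) * C := by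
    rw [Finset.sum_congr rfl (g := fun _ => C) (fun z hz => by
      simp only [Finset.mem_Ico] at hz
      simp only [hf]
      rw [if_neg (by omega), if_neg (by omega), if_pos (by omega)])]
    have : m - (n+1) = m - n - 1 := by omega
    rw [Finset.sum_const, Nat.card_Ico, this, nsmul_eq_mul]
  have h4 : ∑ z ∈ Finset.Ico m (m+1), f z = D := by
    rw [Finset.sum_congr rfl (g := fun _ => D) (fun z hz => by
      simp only [Finset.mem_Ico] at hz
      simp only [hf]
      rw [if_neg (by omega), if_neg (by omega), if_neg (by omega), if_pos (by omega)])]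
    simp
  have h5 : ∑ z ∈ Finset.Ico (m+1) N, f z = ((N - 1 - m : ℕ) : ℝ) * E := by
    rw [Finset.sum_congr rfl (g := fun _ => E) (fun z hz => by
      simp only [Finset.mem_Ico] at hz
      simp only [hf]
      rw [if_neg (by omega), if_neg (by omega), if_neg (by omega), if_neg (by omega)])]
    have : N - (m+1) = N - 1 - m := by omega
    rw [Finset.sum_const, Nat.card_Ico, this, nsmul_eq_mul]
  rw [Finset.range_eq_Ico,
    ← Finset.sum_Ico_consecutive f (Nat.zero_le n) (by omega : n ≤ N),
    ← Finset.sum_Ico_consecutive f (Nat.le_succ n) (by omega : n + 1 ≤ N),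
    ← Finset.sum_Ico_consecutive f (by omega : n + 1 ≤ m) (by omega : m ≤ N),
    ← Finset.sum_Ico_consecutive f (Nat.le_succ m) (by omega : m + 1 ≤ N),
    h1, h2, h3, h4, h5]
  ring

lemma alphaFn_gt_one {ε : ℝ} (hε : 0 < ε) : 1 < alphaFn ε := by
  have hE : 1 < Real.exp ε := by
    calc (1:ℝ) = Real.exp 0 := by simp
    _ < Real.exp ε := Real.exp_lt_exp.mpr hε
  rw [alphaFn, lt_div_iff₀ (by linarith)]
  linarith

set_option maxHeartbeats 2000000 in
lemma mCor_le_bound (c r ε : ℝ) (hr : 0 < r) (hε : 0 < ε) (d : ℕ) (w w' : ℝ)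
    (hw : w ∈ Icc (c - r) (c + r)) (hw' : w' ∈ Icc (c - r) (c + r)) :
    mCor c r ε d w w' ≤ 2 * (r * alphaFn ε) * |w + w' - 2*c| - (w + w' - 2*c)^2
      + 4 * (r * alphaFn ε)^2 / 2^d := by
  obtain ⟨hw1, hw2⟩ := hw
  obtain ⟨hw1', hw2'⟩ := hw'
  have hα := alphaFn_gt_one hε
  have hα0 : alphaFn ε ≠ 0 := by linarith
  have hrne : r ≠ 0 := ne_of_gt hr
  set a : ℝ := r * alphaFn ε with ha
  have hra : r < a := by rw [ha]; nlinarith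
  have ha0 : 0 < a := lt_trans hr hra
  set t : ℝ := w + w' - 2*c with htdef
  have hNpos : (0:ℝ) < 2^d := by positivity
  -- q rewrites and bounds
  have hq1 : qOf c r ε w = (a + (w - c)) / (2*a) := by
    rw [qOf, ha]; field_simp
  have hq2 : 1 - qOf c r ε w' = (a - (w' - c)) / (2*a) := by
    rw [qOf, ha]; field_simp; ring
  have hq1pos : 0 < qOf c r ε w := by
    rw [hq1]; apply div_pos (by linarith) (by linarith)
  have hq1lt : qOf c r ε w < 1 := by
    rw [hq1, div_lt_one (by linarith)]; linarith
  have hq2pos : 0 < 1 - qOf c r ε w' := by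
    rw [hq2]; apply div_pos (by linarith) (by linarith)
  have hq2lt : 1 - qOf c r ε w' < 1 := by
    rw [hq2, div_lt_one (by linarith)]; linarith
  -- floors
  have hT1nn : 0 ≤ T1 c r ε d w :=
    Int.le_floor.mpr (by push_cast; positivity)
  have hT1lt : T1 c r ε d w < (2:ℤ)^d := by
    rw [T1, Int.floor_lt]; push_cast; nlinarith
  have hT2nn : 0 ≤ T2 c r ε d w' :=
    Int.le_floor.mpr (by push_cast; positivity)
  have hT2lt : T2 c r ε d w' < (2:ℤ)^d := by
    rw [T2, Int.floor_lt]; push_cast; nlinarith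
  set n1 : ℕ := (T1 c r ε d w).toNat with hn1def
  set n2 : ℕ := (T2 c r ε d w').toNat with hn2def
  have hn1 : (n1 : ℤ) = T1 c r ε d w := Int.toNat_of_nonneg hT1nn
  have hn2 : (n2 : ℤ) = T2 c r ε d w' := Int.toNat_of_nonneg hT2nn
  have hcastpow : ((2^d : ℕ) : ℤ) = (2:ℤ)^d := by push_cast; ring
  have hn1N : n1 < 2^d := by omega
  have hn2N : n2 < 2^d := by omega
  set p1 : ℝ := pU1 c r ε d w with hp1def
  set p2 : ℝ := pU2 c r ε d w' with hp2def
  have hp1nn : 0 ≤ p1 := by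
    rw [hp1def, pU1]; have := Int.floor_le ((2:ℝ)^d * qOf c r ε w); linarith
  have hp1lt : p1 < 1 := by
    rw [hp1def, pU1]; have := Int.lt_floor_add_one ((2:ℝ)^d * qOf c r ε w); linarith
  have hp2nn : 0 ≤ p2 := by
    rw [hp2def, pU2]; have := Int.floor_le ((2:ℝ)^d * (1 - qOf c r ε w')); linarith
  have hp2lt : p2 < 1 := by
    rw [hp2def, pU2]; have := Int.lt_floor_add_one ((2:ℝ)^d * (1 - qOf c r ε w')); linarith
  have hn1R : ((n1 : ℕ) : ℝ) = ((T1 c r ε d w : ℤ) : ℝ) := by rw [← hn1]; norm_cast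
  have hn2R : ((n2 : ℕ) : ℝ) = ((T2 c r ε d w' : ℤ) : ℝ) := by rw [← hn2]; norm_cast
  rw [T1] at hn1R
  rw [T2] at hn2R
  have hfl1 : (n1 : ℝ) + p1 = (2:ℝ)^d * qOf c r ε w := by
    rw [hp1def, pU1, hn1R]; ring
  have hfl2 : (n2 : ℝ) + p2 = (2:ℝ)^d * (1 - qOf c r ε w') := by
    rw [hp2def, pU2, hn2R]; ring
  -- key linear relations
  have hkey1 : 2*a*((n1:ℝ) + p1) = (2:ℝ)^d * (a + (w - c)) := by
    rw [hfl1, hq1]; field_simp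
  have hkey2 : 2*a*((n2:ℝ) + p2) = (2:ℝ)^d * (a - (w' - c)) := by
    rw [hfl2, hq2]; field_simp
  -- per-z values
  set g1 : ℕ → ℝ := fun z => if z < n1 then a else if n1 < z then -a else (2*p1 - 1)*a
    with hg1
  set g2 : ℕ → ℝ := fun z => if z < n2 then -a else if n2 < z then a else (1 - 2*p2)*a
    with hg2
  have hQ1 : ∀ (z : ℕ) (u : Bool), Q1val c r ε d w z u
      = c + (if z < n1 then a else if n1 < z then -a else (if u then 1 else -1)*a) := by
    intro z u
    rw [Q1val, ← hn1, ha]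
    split_ifs <;> first | ring1 | (exfalso; omega)
  have hQ2 : ∀ (z : ℕ) (u' : Bool), Q2val c r ε d w' z u'
      = c + (if z < n2 then -a else if n2 < z then a else -((if u' then 1 else -1)*a)) := by
    intro z u'
    rw [Q2val, ← hn2, ha]
    split_ifs <;> first | ring1 | (exfalso; omega)
  have hinner : ∀ z ∈ Finset.range (2^d),
      (∑ u : Bool, ∑ u' : Bool, μjoint c r ε d w w' z u u' *
        (Q1val c r ε d w z u + Q2val c r ε d w' z u' - w - w') ^ 2)
      = ((2:ℝ)^d)⁻¹ * (2*a^2 + t^2 - 2*t*(g1 z + g2 z) + 2*(g1 z * g2 z)) := by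
    intro z _
    simp only [Fintype.sum_bool, μjoint, hQ1, hQ2, hg1, hg2, ← hp1def, ← hp2def, ↓reduceIte,
      Bool.false_eq_true, if_false, htdef]
    split_ifs <;> ring1
  -- split the sum
  have hsplit : mCor c r ε d w w' = ((2:ℝ)^d)⁻¹ *
      ((2:ℝ)^d * (2*a^2 + t^2)
        - 2*t*((∑ z ∈ Finset.range (2^d), g1 z) + (∑ z ∈ Finset.range (2^d), g2 z))
        + 2 * (∑ z ∈ Finset.range (2^d), g1 z * g2 z)) := by
    rw [mCor, Finset.sum_congr rfl hinner, ← Finset.mul_sum]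
    congr 1
    simp only [Finset.sum_add_distrib, Finset.sum_sub_distrib, ← Finset.mul_sum,
      Finset.sum_const, Finset.card_range, nsmul_eq_mul]
    push_cast
    ring
  -- the three sums
  have hS1 : ∑ z ∈ Finset.range (2^d), g1 z = (2:ℝ)^d * (w - c) := by
    rw [hg1, sum_tri _ _ hn1N]
    rw [show (2^d - 1 - n1 : ℕ) = 2^d - (n1+1) from by omega, Nat.cast_sub (by omega)]
    push_cast
    linear_combination hkey1
  have hS2 : ∑ z ∈ Finset.range (2^d), g2 z = (2:ℝ)^d * (w' - c) := by
    rw [hg2, sum_tri _ _ hn2N]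
    rw [show (2^d - 1 - n2 : ℕ) = 2^d - (n2+1) from by omega, Nat.cast_sub (by omega)]
    push_cast
    linear_combination -hkey2
  have hk : 2*a^2*((n1:ℝ)+p1) - 2*a^2*((n2:ℝ)+p2) = (2:ℝ)^d*a*t := by
    rw [htdef]; linear_combination a*hkey1 - a*hkey2
  have hS12 : ∑ z ∈ Finset.range (2^d), g1 z * g2 z
      ≤ (2:ℝ)^d * (a*|t| - a^2) + 2*a^2 := by
    have hfact : (0:ℝ) ≤ (2:ℝ)^d * a * (|t| + t) := by
      have : (0:ℝ) ≤ |t| + t := by linarith [neg_abs_le t]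
      positivity
    have hfact' : (0:ℝ) ≤ (2:ℝ)^d * a * (|t| - t) := by
      have : (0:ℝ) ≤ |t| - t := by linarith [le_abs_self t]
      positivity
    have hfact'' : (0:ℝ) ≤ (2:ℝ)^d * a * |t| := by positivity
    rcases lt_trichotomy n1 n2 with hlt | heq | hgt
    · have hform : ∀ z ∈ Finset.range (2^d), g1 z * g2 z
          = (if z < n1 then -a^2 else if z = n1 then -((2*p1-1)*a^2)
              else if z < n2 then a^2 else if z = n2 then -((1-2*p2)*a^2) else -a^2) := by
        intro z _
        simp only [hg1, hg2]
        split_ifs <;> first | ring1 | (exfalso; omega)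
      rw [Finset.sum_congr rfl hform, sum_penta _ _ _ hlt hn2N]
      rw [show (n2 - n1 - 1 : ℕ) = n2 - (n1+1) from by omega, Nat.cast_sub (by omega)]
      rw [show (2^d - 1 - n2 : ℕ) = 2^d - (n2+1) from by omega, Nat.cast_sub (by omega)]
      push_cast
      linarith [hk, hfact, sq_nonneg a]
    · have hform : ∀ z ∈ Finset.range (2^d), g1 z * g2 z
          = (if z < n1 then -a^2 else if n1 < z then -a^2
              else ((2*p1-1)*(1-2*p2))*a^2) := by
        intro z _
        simp only [hg1, hg2]
        split_ifs <;> first | ring1 | (exfalso; omega)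
      rw [Finset.sum_congr rfl hform, sum_tri _ _ hn1N]
      rw [show (2^d - 1 - n1 : ℕ) = 2^d - (n1+1) from by omega, Nat.cast_sub (by omega)]
      have hE : (2*p1-1)*(1-2*p2) ≤ 1 := by
        nlinarith [mul_nonneg hp1nn hp2nn, mul_nonneg hp1nn (by linarith : (0:ℝ) ≤ 1 - p2),
          mul_nonneg (by linarith : (0:ℝ) ≤ 1 - p1) hp2nn,
          mul_nonneg (by linarith : (0:ℝ) ≤ 1-p1) (by linarith : (0:ℝ) ≤ 1-p2)]
      have hEa : (2*p1-1)*(1-2*p2)*a^2 ≤ a^2 := by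
        have := mul_le_mul_of_nonneg_right hE (sq_nonneg a); linarith
      push_cast
      linarith [hEa, hfact'']
    · have hform : ∀ z ∈ Finset.range (2^d), g1 z * g2 z
          = (if z < n2 then -a^2 else if z = n2 then (1-2*p2)*a^2
              else if z < n1 then a^2 else if z = n1 then (2*p1-1)*a^2 else -a^2) := by
        intro z _
        simp only [hg1, hg2]
        split_ifs <;> first | ring1 | (exfalso; omega)
      rw [Finset.sum_congr rfl hform, sum_penta _ _ _ hgt hn1N]
      rw [show (n1 - n2 - 1 : ℕ) = n1 - (n2+1) from by omega, Nat.cast_sub (by omega)]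
      rw [show (2^d - 1 - n1 : ℕ) = 2^d - (n1+1) from by omega, Nat.cast_sub (by omega)]
      push_cast
      linarith [hk, hfact', sq_nonneg a]
  -- assemble
  rw [hsplit, hS1, hS2]
  have hmono : ((2:ℝ)^d)⁻¹ *
      ((2:ℝ)^d * (2*a^2 + t^2)
        - 2*t*((2:ℝ)^d * (w - c) + (2:ℝ)^d * (w' - c))
        + 2 * (∑ z ∈ Finset.range (2^d), g1 z * g2 z))
      ≤ ((2:ℝ)^d)⁻¹ *
      ((2:ℝ)^d * (2*a^2 + t^2)
        - 2*t*((2:ℝ)^d * (w - c) + (2:ℝ)^d * (w' - c))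
        + 2 * ((2:ℝ)^d * (a*|t| - a^2) + 2*a^2)) := by
    apply mul_le_mul_of_nonneg_left (by linarith [hS12]) (by positivity)
  refine le_trans hmono (le_of_eq ?_)
  rw [htdef]
  field_simp
  ring

lemma mstar_lower_bound (c r ε : ℝ) (hr : 0 < r) (hε : 0 < ε)
    (γ2 : ℝ) (hγ : 2*c - γ2 < γ2)
    (P : ℝ → ℝ → Bool → Bool → ℝ)
    (w w' : ℝ) (hw : w ∈ Icc (c - r) (c + r)) (hw' : w' ∈ Icc (c - r) (c + r))
    (hnn : ∀ w ∈ Icc (c - r) (c + r), ∀ w' ∈ Icc (c - r) (c + r), ∀ b b' : Bool,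
      0 ≤ P w w' b b')
    (hsum : ∀ w ∈ Icc (c - r) (c + r), ∀ w' ∈ Icc (c - r) (c + r),
      (∑ b : Bool, ∑ b' : Bool, P w w' b b') = 1)
    (hC4 : ∀ w ∈ Icc (c - r) (c + r), ∀ w' ∈ Icc (c - r) (c + r),
      (∑ b : Bool, ∑ b' : Bool, P w w' b b' * (if b then γ2 else 2*c - γ2)) = w ∧
      (∑ b : Bool, ∑ b' : Bool, P w w' b b' * (if b' then γ2 else 2*c - γ2)) = w')
    (hC5 : ∀ v ∈ Icc (c - r) (c + r), ∀ v' ∈ Icc (c - r) (c + r),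
      ∀ w'' ∈ Icc (c - r) (c + r), ∀ b : Bool,
      (∑ b' : Bool, P v w'' b b') ≤ Real.exp ε * (∑ b' : Bool, P v' w'' b b') ∧
      (∑ b' : Bool, P w'' v b' b) ≤ Real.exp ε * (∑ b' : Bool, P w'' v' b' b)) :
    2 * (r * alphaFn ε) * |w + w' - 2*c| - (w + w' - 2*c)^2 ≤
      (∑ b : Bool, ∑ b' : Bool, P w w' b b' *
            ((if b then γ2 else 2*c - γ2) + (if b' then γ2 else 2*c - γ2) - w - w') ^ 2) := by
  have hE : 1 < Real.exp ε := by
    calc (1:ℝ) = Real.exp 0 := by simp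
    _ < Real.exp ε := Real.exp_lt_exp.mpr hε
  have hsγ : 0 < γ2 - c := by linarith
  have hcr1 : c + r ∈ Icc (c-r) (c+r) := ⟨by linarith, le_rfl⟩
  have hcr2 : c - r ∈ Icc (c-r) (c+r) := ⟨le_rfl, by linarith⟩
  have e1p := (hC4 (c+r) hcr1 w' hw').1
  have s1p := hsum (c+r) hcr1 w' hw'
  have e1m := (hC4 (c-r) hcr2 w' hw').1
  have s1m := hsum (c-r) hcr2 w' hw'
  have c5 := (hC5 (c+r) hcr1 (c-r) hcr2 w' hw' true).1
  simp only [Fintype.sum_bool, ↓reduceIte, Bool.false_eq_true, if_false] at e1p s1p e1m s1m c5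
  have hplus : 2*(γ2 - c)*(P (c+r) w' true true + P (c+r) w' true false) = (γ2 - c) + r := by
    linear_combination e1p - (2*c - γ2)*s1p
  have hminus : 2*(γ2 - c)*(P (c-r) w' true true + P (c-r) w' true false) = (γ2 - c) - r := by
    linear_combination e1m - (2*c - γ2)*s1m
  have hsa : r * alphaFn ε ≤ γ2 - c := by
    have h2 := mul_le_mul_of_nonneg_left c5 (by linarith : (0:ℝ) ≤ 2*(γ2-c))
    have h3 : Real.exp ε * (2*(γ2-c)*(P (c-r) w' true true + P (c-r) w' true false))
        = Real.exp ε * ((γ2-c) - r) := by rw [hminus]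
    have h4 : (γ2 - c) + r ≤ Real.exp ε * ((γ2-c) - r) := by linarith [h2, hplus, h3]
    rw [alphaFn]
    rw [show r * ((Real.exp ε + 1)/(Real.exp ε - 1)) = r * (Real.exp ε + 1)/(Real.exp ε - 1)
      from by ring, div_le_iff₀ (by linarith)]
    linarith [h4]
  -- main lower bound
  have hsum' := hsum w hw w' hw'
  have e1 := (hC4 w hw w' hw').1
  have e2 := (hC4 w hw w' hw').2
  simp only [Fintype.sum_bool, ↓reduceIte, Bool.false_eq_true, if_false] at hsum' e1 e2 ⊢
  have hpffnn := hnn w hw w' hw' false false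
  have hpttnn := hnn w hw w' hw' true true
  have hdiff : 2*(γ2-c)*(P w w' true true - P w w' false false) = w + w' - 2*c := by
    linear_combination e1 + e2 - 2*c*hsum'
  have hform2 : P w w' true true * (γ2 + γ2 - w - w')^2
        + P w w' true false * (γ2 + (2*c - γ2) - w - w')^2
        + (P w w' false true * ((2*c - γ2) + γ2 - w - w')^2
        + P w w' false false * ((2*c - γ2) + (2*c - γ2) - w - w')^2)
      = 8*(γ2-c)^2*(P w w' true true) - 2*(γ2-c)*(w+w'-2*c) - (w+w'-2*c)^2 := by
    linear_combination (w+w'-2*c)^2*hsum' - 2*((γ2-c)+(w+w'-2*c))*hdiff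
  rcases abs_cases (w + w' - 2*c) with ⟨hab, hsign⟩ | ⟨hab, hsign⟩ <;> rw [hab]
  · have h6 : w + w' - 2*c ≤ 2*(γ2-c)*(P w w' true true) := by
      linarith [hdiff, mul_nonneg hsγ.le hpffnn]
    have hint1 : 0 ≤ (γ2-c)*(2*(γ2-c)*(P w w' true true) - (w+w'-2*c)) :=
      mul_nonneg hsγ.le (by linarith)
    have hint2 : 0 ≤ (w+w'-2*c)*((γ2-c) - r*alphaFn ε) := mul_nonneg hsign (by linarith)
    rw [hform2]  -- may fail: pattern LHS is left of equality; goal RHS contains that sum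
    linarith [hint1, hint2]
  · have hint1 : 0 ≤ (γ2-c)^2*(P w w' true true) := mul_nonneg (sq_nonneg _) hpttnn
    have hint2 : 0 ≤ (-(w+w'-2*c))*((γ2-c) - r*alphaFn ε) :=
      mul_nonneg (by linarith) (by linarith)
    rw [hform2]
    linarith [hint1, hint2]

/-- let `(Q*1, Q*2)` be any pair of binary-output quantizers on `[c−r, c+r]`
with output levels `γ1 < γ2` symmetric about `c` (`γ1 = 2c − γ2`), described by a joint pmf
`P w w' : Bool → Bool → ℝ` on `{γ1, γ2}²` (with `true ↦ γ2`, `false ↦ γ1`) whose first marginal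
depends only on `w` and second marginal only on `w'`, satisfying unbiasedness (C4) and
`ε`-PLDP (C5).  Then, with `m*(w, w') = E[(Q*1(w) + Q*2(w') − w − w')²]` and `m(w, w')` the MSE
of the correlated stochastic quantizers with `d` shared bits,
`m(w, w') − m*(w, w') ≤ 3r²α(ε)²/2^{d−5}` for all `w, w' ∈ [c−r, c+r]`. -/
theorem stmt11 (c r ε : ℝ) (hr : 0 < r) (hε : 0 < ε) (d : ℕ)
    (γ1 γ2 : ℝ) (hγ : γ1 < γ2) (hsym : γ1 = 2 * c - γ2)
    (P : ℝ → ℝ → Bool → Bool → ℝ)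
    (hnn : ∀ w ∈ Icc (c - r) (c + r), ∀ w' ∈ Icc (c - r) (c + r), ∀ b b' : Bool,
      0 ≤ P w w' b b')
    (hsum : ∀ w ∈ Icc (c - r) (c + r), ∀ w' ∈ Icc (c - r) (c + r),
      (∑ b : Bool, ∑ b' : Bool, P w w' b b') = 1)
    (hmarg1 : ∀ w, ∀ w₁' ∈ Icc (c - r) (c + r), ∀ w₂' ∈ Icc (c - r) (c + r), ∀ b : Bool,
      (∑ b' : Bool, P w w₁' b b') = (∑ b' : Bool, P w w₂' b b'))
    (hmarg2 : ∀ w', ∀ w₁ ∈ Icc (c - r) (c + r), ∀ w₂ ∈ Icc (c - r) (c + r), ∀ b' : Bool,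
      (∑ b : Bool, P w₁ w' b b') = (∑ b : Bool, P w₂ w' b b'))
    (hC4 : ∀ w ∈ Icc (c - r) (c + r), ∀ w' ∈ Icc (c - r) (c + r),
      (∑ b : Bool, ∑ b' : Bool, P w w' b b' * (if b then γ2 else γ1)) = w ∧
      (∑ b : Bool, ∑ b' : Bool, P w w' b b' * (if b' then γ2 else γ1)) = w')
    (hC5 : ∀ v ∈ Icc (c - r) (c + r), ∀ v' ∈ Icc (c - r) (c + r),
      ∀ w'' ∈ Icc (c - r) (c + r), ∀ b : Bool,
      (∑ b' : Bool, P v w'' b b') ≤ Real.exp ε * (∑ b' : Bool, P v' w'' b b') ∧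
      (∑ b' : Bool, P w'' v b' b) ≤ Real.exp ε * (∑ b' : Bool, P w'' v' b' b)) :
    ∀ w ∈ Icc (c - r) (c + r), ∀ w' ∈ Icc (c - r) (c + r),
      mCor c r ε d w w' -
          (∑ b : Bool, ∑ b' : Bool, P w w' b b' *
            ((if b then γ2 else γ1) + (if b' then γ2 else γ1) - w - w') ^ 2) ≤
        3 * r ^ 2 * alphaFn ε ^ 2 / (2 : ℝ) ^ ((d : ℤ) - 5) := by
  subst hsym
  intro w hw w' hw'
  have hmCor := mCor_le_bound c r ε hr hε d w w' hw hw'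
  have hmstar := mstar_lower_bound c r ε hr hε γ2 hγ P w w' hw hw' hnn hsum hC4 hC5
  have hNne : ((2:ℝ)^d) ≠ 0 := by positivity
  have hz : (2:ℝ)^((d:ℤ)-5) = (2:ℝ)^d / 32 := by
    rw [zpow_sub₀ (by norm_num : (2:ℝ) ≠ 0), zpow_natCast]
    norm_num
  have hRHS : 3*r^2*alphaFn ε^2/(2:ℝ)^((d:ℤ)-5) = 96*(r*alphaFn ε)^2/2^d := by
    rw [hz]
    field_simp
    ring
  have h4 : 4*(r*alphaFn ε)^2/2^d ≤ 96*(r*alphaFn ε)^2/2^d := by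
    gcongr
    linarith [sq_nonneg (r * alphaFn ε)]
  simp only [Fintype.sum_bool, ↓reduceIte, Bool.false_eq_true, if_false] at hmstar ⊢
  rw [hRHS]
  linarith [hmCor, hmstar, h4]
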